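/- arXiv:0901.4954 — 2 statements merged into one kernel-verified Lean document; each statement's English description precedes it below -/
import Mathlib

section
/- Let P_initial and P_final be stochastic matrices on a finite state space Ω, with P_final irreducible and aperiodic with stationary distribution π_f and mixing time t_mix. For any 0 < ε < 1, if T ≥ C · t_mix(ε/2)² / ε for a suitable universal constant C, then for every probability distribution ν, ‖ν P_{1/T} P_{2/T} ⋯ P_{(T−1)/T} P_1 − π_f‖_TV ≤ ε, where P_s = (1−s)P_initial + s P_final. -/
open Matrix Finset

set_option linter.unusedSectionVars false

section adiabaticAux
variable {Ω : Type} [Fintype Ω] [DecidableEq Ω]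

private def StochMat (A : Matrix Ω Ω ℝ) : Prop :=
  (∀ x y, 0 ≤ A x y) ∧ ∀ x, ∑ y, A x y = 1

private lemma vm (v : Ω → ℝ) (A : Matrix Ω Ω ℝ) (x : Ω) :
    vecMul v A x = ∑ y, v y * A y x := rfl

private lemma sum_vecMul' (A : Matrix Ω Ω ℝ) (hA : ∀ x, ∑ y, A x y = 1) (v : Ω → ℝ) :
    ∑ y, vecMul v A y = ∑ x, v x := by
  simp only [vm]
  rw [Finset.sum_comm]
  simp [← Finset.mul_sum, hA]

private lemma nonneg_vecMul {A : Matrix Ω Ω ℝ} (hA : ∀ x y, 0 ≤ A x y)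
    {v : Ω → ℝ} (hv : ∀ x, 0 ≤ v x) (y : Ω) : 0 ≤ vecMul v A y := by
  rw [vm]; exact Finset.sum_nonneg fun x _ => mul_nonneg (hv x) (hA x y)

private lemma contract (A : Matrix Ω Ω ℝ) (hA : StochMat A) (w : Ω → ℝ) :
    ∑ y, |vecMul w A y| ≤ ∑ x, |w x| := by
  calc ∑ y, |vecMul w A y| ≤ ∑ y, ∑ x, |w x| * A x y := by
        refine Finset.sum_le_sum fun y _ => ?_
        rw [vm]
        refine (Finset.abs_sum_le_sum_abs _ _).trans ?_
        refine Finset.sum_le_sum fun x _ => ?_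
        rw [abs_mul, abs_of_nonneg (hA.1 x y)]
    _ = ∑ x, |w x| := by rw [Finset.sum_comm]; simp [← Finset.mul_sum, hA.2]

private lemma diff_bound {A B : Matrix Ω Ω ℝ} {μ : Ω → ℝ} (hμ : ∀ x, 0 ≤ μ x)
    (hμ1 : ∑ x, μ x = 1) {η : ℝ} (h : ∀ x, ∑ y, |A x y - B x y| ≤ η) :
    ∑ y, |vecMul μ A y - vecMul μ B y| ≤ η := by
  calc ∑ y, |vecMul μ A y - vecMul μ B y| ≤ ∑ y, ∑ x, μ x * |A x y - B x y| := by
        refine Finset.sum_le_sum fun y _ => ?_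
        rw [vm, vm, ← Finset.sum_sub_distrib]
        refine (Finset.abs_sum_le_sum_abs _ _).trans ?_
        refine Finset.sum_le_sum fun x _ => ?_
        rw [← mul_sub, abs_mul, abs_of_nonneg (hμ x)]
    _ = ∑ x, μ x * ∑ y, |A x y - B x y| := by
        rw [Finset.sum_comm]; simp [Finset.mul_sum]
    _ ≤ ∑ x, μ x * η := Finset.sum_le_sum fun x _ => mul_le_mul_of_nonneg_left (h x) (hμ x)
    _ = η := by rw [← Finset.sum_mul, hμ1, one_mul]

private lemma strict_contract (A : Matrix Ω Ω ℝ) (hA : StochMat A) {δ : ℝ}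
    (hδ : ∀ x y, δ ≤ A x y) (w : Ω → ℝ) (hw : ∑ x, w x = 0) :
    ∑ y, |vecMul w A y| ≤ (1 - (Fintype.card Ω) * δ) * ∑ x, |w x| := by
  have key : ∀ y, vecMul w A y = ∑ x, w x * (A x y - δ) := by
    intro y
    rw [vm]
    simp [mul_sub, Finset.sum_sub_distrib, ← Finset.sum_mul, hw]
  calc ∑ y, |vecMul w A y| ≤ ∑ y, ∑ x, |w x| * (A x y - δ) := by
        refine Finset.sum_le_sum fun y _ => ?_
        rw [key]
        refine (Finset.abs_sum_le_sum_abs _ _).trans ?_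
        refine Finset.sum_le_sum fun x _ => ?_
        rw [abs_mul, abs_of_nonneg (show (0:ℝ) ≤ A x y - δ by linarith [hδ x y])]
    _ = ∑ x, |w x| * (1 - (Fintype.card Ω) * δ) := by
        rw [Finset.sum_comm]
        refine Finset.sum_congr rfl fun x _ => ?_
        rw [← Finset.mul_sum, Finset.sum_sub_distrib, hA.2 x, Finset.sum_const,
          Finset.card_univ, nsmul_eq_mul]
    _ = (1 - (Fintype.card Ω) * δ) * ∑ x, |w x| := by rw [← Finset.sum_mul, mul_comm]

private lemma stoch_pow (A : Matrix Ω Ω ℝ) (hA : StochMat A) : ∀ n, StochMat (A ^ n) := by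
  intro n
  induction n with
  | zero =>
    constructor
    · intro x y
      simp [Matrix.one_apply]
      split <;> norm_num
    · intro x; simp [Matrix.one_apply]
  | succ n ih =>
    rw [pow_succ]
    constructor
    · intro x y
      rw [Matrix.mul_apply]
      exact Finset.sum_nonneg fun z _ => mul_nonneg (ih.1 x z) (hA.1 z y)
    · intro x
      simp only [Matrix.mul_apply]
      rw [Finset.sum_comm]
      simp [← Finset.mul_sum, hA.2, ih.2 x]

private lemma tri_sum (a b c : Ω → ℝ) :
    ∑ y, |a y - c y| ≤ (∑ y, |a y - b y|) + ∑ y, |b y - c y| := by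
  rw [← Finset.sum_add_distrib]
  exact Finset.sum_le_sum fun y _ => abs_sub_le _ _ _

private lemma stat_pow (Pfin : Matrix Ω Ω ℝ) (πf : Ω → ℝ)
    (hstat : ∀ y, ∑ x, πf x * Pfin x y = πf y) :
    ∀ s : ℕ, vecMul πf (Pfin ^ s) = πf := by
  have h1 : vecMul πf Pfin = πf := funext fun y => hstat y
  intro s
  induction s with
  | zero => simp [Matrix.vecMul_one]
  | succ s ih => rw [pow_succ, ← Matrix.vecMul_vecMul, ih, h1]

private lemma mix_exists [Nonempty Ω] (Pfin : Matrix Ω Ω ℝ) (hPf : StochMat Pfin)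
    (k : ℕ) (hk : ∀ x y, 0 < (Pfin ^ k) x y) (πf : Ω → ℝ)
    (hπ0 : ∀ x, 0 ≤ πf x) (hπ1 : ∑ x, πf x = 1)
    (hstat : ∀ y, ∑ x, πf x * Pfin x y = πf y) (ε : ℝ) (hε : 0 < ε) :
    ∃ t : ℕ, ∀ μ : Ω → ℝ, (∀ x, 0 ≤ μ x) → ∑ x, μ x = 1 →
      (1 / 2) * ∑ y, |(Matrix.vecMul μ (Pfin ^ t)) y - πf y| ≤ ε / 2 := by
  obtain ⟨p, -, hmin⟩ := Finset.exists_min_image (univ : Finset (Ω × Ω))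
    (fun p => (Pfin ^ k) p.1 p.2) ⟨(Classical.arbitrary Ω, Classical.arbitrary Ω), mem_univ _⟩
  set δ := (Pfin ^ k) p.1 p.2 with hδdef
  have hδpos : 0 < δ := hk _ _
  have hδle : ∀ x y, δ ≤ (Pfin ^ k) x y := fun x y => hmin (x, y) (mem_univ _)
  set c : ℝ := (Fintype.card Ω) * δ with hcdef
  have hc0 : 0 < c := by
    have h1 : (0:ℝ) < (Fintype.card Ω : ℝ) := by exact_mod_cast Fintype.card_pos
    positivity
  have hc1 : c ≤ 1 := by
    have hx := (stoch_pow Pfin hPf k).2 (Classical.arbitrary Ω)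
    calc c = ∑ _y : Ω, δ := by simp [hcdef, mul_comm]
      _ ≤ ∑ y, (Pfin ^ k) (Classical.arbitrary Ω) y :=
          Finset.sum_le_sum fun y _ => hδle _ y
      _ = 1 := hx
  obtain ⟨m, hm⟩ := exists_pow_lt_of_lt_one (half_pos hε) (show 1 - c < 1 by linarith)
  have key : ∀ n : ℕ, ∀ w : Ω → ℝ, ∑ x, w x = 0 →
      ∑ y, |vecMul w (Pfin ^ (k * n)) y| ≤ (1 - c) ^ n * ∑ x, |w x| := by
    intro n
    induction n with
    | zero => intro w hw; simp
    | succ n ih =>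
      intro w hw
      have e : Pfin ^ (k * (n + 1)) = Pfin ^ (k * n) * Pfin ^ k := by
        rw [← pow_add]; ring_nf
      have hw' : ∑ x, vecMul w (Pfin ^ (k * n)) x = 0 := by
        rw [sum_vecMul' _ (stoch_pow Pfin hPf _).2, hw]
      calc ∑ y, |vecMul w (Pfin ^ (k * (n + 1))) y|
          = ∑ y, |vecMul (vecMul w (Pfin ^ (k * n))) (Pfin ^ k) y| := by
            rw [e, ← Matrix.vecMul_vecMul]
        _ ≤ (1 - c) * ∑ x, |vecMul w (Pfin ^ (k * n)) x| :=
            strict_contract _ (stoch_pow Pfin hPf k) hδle _ hw'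
        _ ≤ (1 - c) * ((1 - c) ^ n * ∑ x, |w x|) :=
            mul_le_mul_of_nonneg_left (ih w hw) (by linarith)
        _ = (1 - c) ^ (n + 1) * ∑ x, |w x| := by ring
  refine ⟨k * m, fun μ hμ0 hμ1 => ?_⟩
  have hw : ∑ x, (μ - πf) x = 0 := by
    simp [Finset.sum_sub_distrib, hμ1, hπ1]
  have hw2 : ∑ x, |(μ - πf) x| ≤ 2 := by
    calc ∑ x, |(μ - πf) x| ≤ ∑ x, (|μ x| + |πf x|) :=
          Finset.sum_le_sum fun x _ => abs_sub _ _
      _ = 2 := by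
          rw [Finset.sum_add_distrib]
          simp only [abs_of_nonneg (hμ0 _), abs_of_nonneg (hπ0 _)]
          rw [hμ1, hπ1]; norm_num
  have hdiff : ∀ y, vecMul μ (Pfin ^ (k * m)) y - πf y
      = vecMul (μ - πf) (Pfin ^ (k * m)) y := by
    intro y
    rw [Matrix.sub_vecMul, stat_pow Pfin πf hstat]
    simp
  have hfin := (key m (μ - πf) hw).trans (by
    calc (1 - c) ^ m * ∑ x, |(μ - πf) x| ≤ (1 - c) ^ m * 2 :=
          mul_le_mul_of_nonneg_left hw2 (pow_nonneg (by linarith) m)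
      _ ≤ (ε / 2) * 2 := by nlinarith [hm.le]
      _ = ε := by ring)
  simp only [hdiff]
  linarith

private lemma foldl_prob (M : ℕ → Matrix Ω Ω ℝ) :
    ∀ L : List ℕ, (∀ j ∈ L, StochMat (M j)) → ∀ μ : Ω → ℝ, (∀ x, 0 ≤ μ x) → ∑ x, μ x = 1 →
      (∀ x, 0 ≤ (L.foldl (fun v j => vecMul v (M j)) μ) x) ∧
        ∑ x, (L.foldl (fun v j => vecMul v (M j)) μ) x = 1 := by
  intro L
  induction L with
  | nil => intro _ μ h0 h1; exact ⟨h0, h1⟩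
  | cons j L ih =>
    intro hS μ h0 h1
    have hj := hS j (List.mem_cons_self)
    simp only [List.foldl_cons]
    exact ih (fun i hi => hS i (List.mem_cons_of_mem _ hi)) _
      (fun x => nonneg_vecMul hj.1 h0 x) (by rw [sum_vecMul' _ hj.2, h1])

private lemma hybrid (B : Matrix Ω Ω ℝ) (hB : StochMat B) (M : ℕ → Matrix Ω Ω ℝ) (η : ℕ → ℝ) :
    ∀ L : List ℕ, (∀ j ∈ L, StochMat (M j)) →
      (∀ j ∈ L, ∀ x, ∑ y, |M j x y - B x y| ≤ η j) →
      ∀ μ : Ω → ℝ, (∀ x, 0 ≤ μ x) → ∑ x, μ x = 1 →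
      ∑ y, |(L.foldl (fun v j => vecMul v (M j)) μ) y - vecMul μ (B ^ L.length) y|
        ≤ (L.map η).sum := by
  intro L
  induction L with
  | nil => intro _ _ μ _ _; simp [Matrix.vecMul_one]
  | cons j L ih =>
    intro hS hη μ hμ0 hμ1
    have hj := hS j (List.mem_cons_self)
    have hμ'0 : ∀ x, 0 ≤ vecMul μ (M j) x := fun x => nonneg_vecMul hj.1 hμ0 x
    have hμ'1 : ∑ x, vecMul μ (M j) x = 1 := by rw [sum_vecMul' _ hj.2, hμ1]
    simp only [List.foldl_cons, List.length_cons, List.map_cons, List.sum_cons]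
    have h1 := ih (fun i hi => hS i (List.mem_cons_of_mem _ hi))
      (fun i hi => hη i (List.mem_cons_of_mem _ hi)) _ hμ'0 hμ'1
    have e : vecMul μ (B ^ (L.length + 1)) = vecMul (vecMul μ B) (B ^ L.length) := by
      rw [Matrix.vecMul_vecMul, ← pow_succ']
    have h2 : ∑ y, |vecMul (vecMul μ (M j)) (B ^ L.length) y
        - vecMul μ (B ^ (L.length + 1)) y| ≤ η j := by
      rw [e]
      have hc := contract (B ^ L.length) (stoch_pow B hB _) (vecMul μ (M j) - vecMul μ B)
      simp only [Matrix.sub_vecMul, Pi.sub_apply] at hc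
      exact hc.trans (diff_bound hμ0 hμ1 (hη j (List.mem_cons_self)))
    calc ∑ y, |(L.foldl (fun v j => vecMul v (M j)) (vecMul μ (M j))) y
          - vecMul μ (B ^ (L.length + 1)) y|
        ≤ (∑ y, |(L.foldl (fun v j => vecMul v (M j)) (vecMul μ (M j))) y
            - vecMul (vecMul μ (M j)) (B ^ L.length) y|)
          + ∑ y, |vecMul (vecMul μ (M j)) (B ^ L.length) y
            - vecMul μ (B ^ (L.length + 1)) y| := tri_sum _ _ _
      _ ≤ (L.map η).sum + η j := add_le_add h1 h2
      _ = η j + (L.map η).sum := by ring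

end adiabaticAux

/-- discrete-time adiabatic theorem for Markov chains: there is a universal
constant `C` such that if `T ≥ C · t_mix(ε/2)² / ε` then for every initial distribution `ν`,
`‖ν P_{1/T} P_{2/T} ⋯ P_1 − π_f‖_TV ≤ ε`, where `P_s = (1−s)P_init + s P_fin`. -/
theorem stmt_12 :
    ∃ C : ℝ, 0 < C ∧
      ∀ (Ω : Type) [Fintype Ω] [DecidableEq Ω] [Nonempty Ω]
        (Pinit Pfin : Matrix Ω Ω ℝ),
        ((∀ x y, 0 ≤ Pinit x y) ∧ ∀ x, ∑ y, Pinit x y = 1) →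
        ((∀ x y, 0 ≤ Pfin x y) ∧ ∀ x, ∑ y, Pfin x y = 1) →
        (∃ k : ℕ, ∀ x y, 0 < (Pfin ^ k) x y) →          -- irreducible and aperiodic
        ∀ πf : Ω → ℝ, ((∀ x, 0 ≤ πf x) ∧ ∑ x, πf x = 1) →
        (∀ y, ∑ x, πf x * Pfin x y = πf y) →             -- stationary distribution
        ∀ ε : ℝ, 0 < ε → ε < 1 →
        ∀ T : ℕ,
        (T : ℝ) ≥ C * (sInf {t : ℕ | ∀ μ : Ω → ℝ, (∀ x, 0 ≤ μ x) → ∑ x, μ x = 1 →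
            (1 / 2) * ∑ y, |(Matrix.vecMul μ (Pfin ^ t)) y - πf y| ≤ ε / 2} : ℕ) ^ 2 / ε →
        ∀ ν : Ω → ℝ, (∀ x, 0 ≤ ν x) → ∑ x, ν x = 1 →
        (1 / 2) * ∑ y,
            |((List.range T).foldl
                (fun (μ : Ω → ℝ) k => Matrix.vecMul μ
                  ((1 - ((k : ℝ) + 1) / T) • Pinit + (((k : ℝ) + 1) / T) • Pfin)) ν) y
              - πf y| ≤ ε := by
  refine ⟨2, by norm_num, ?_⟩
  intro Ω _ _ _ Pinit Pfin hPi hPf hprim πf hπ hstat ε hε hε1 T hT ν hν0 hν1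
  obtain ⟨k, hk⟩ := hprim
  set S : Set ℕ := {t : ℕ | ∀ μ : Ω → ℝ, (∀ x, 0 ≤ μ x) → ∑ x, μ x = 1 →
      (1 / 2) * ∑ y, |(Matrix.vecMul μ (Pfin ^ t)) y - πf y| ≤ ε / 2} with hSdef
  have hSne : S.Nonempty := mix_exists Pfin hPf k hk πf hπ.1 hπ.2 hstat ε hε
  set t := sInf S with htdef
  have ht : ∀ μ : Ω → ℝ, (∀ x, 0 ≤ μ x) → ∑ x, μ x = 1 →
      (1 / 2) * ∑ y, |(Matrix.vecMul μ (Pfin ^ t)) y - πf y| ≤ ε / 2 :=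
    Nat.sInf_mem hSne
  set Mstep : ℕ → Matrix Ω Ω ℝ := fun j =>
    (1 - ((j : ℝ) + 1) / T) • Pinit + (((j : ℝ) + 1) / T) • Pfin with hMdef
  have hMstoch : ∀ j ∈ List.range T, StochMat (Mstep j) := by
    intro j hj
    rw [List.mem_range] at hj
    have hT1 : (1:ℝ) ≤ T := by exact_mod_cast Nat.one_le_iff_ne_zero.mpr (by omega)
    have hs0 : 0 ≤ ((j:ℝ)+1)/T := by positivity
    have hs1 : ((j:ℝ)+1)/T ≤ 1 := by
      rw [div_le_one (by linarith)]
      exact_mod_cast Nat.succ_le_of_lt hj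
    constructor
    · intro x y
      simp only [hMdef, Matrix.add_apply, Matrix.smul_apply, smul_eq_mul]
      have h1 := hPi.1 x y; have h2 := hPf.1 x y
      nlinarith
    · intro x
      simp only [hMdef, Matrix.add_apply, Matrix.smul_apply, smul_eq_mul]
      rw [Finset.sum_add_distrib, ← Finset.mul_sum, ← Finset.mul_sum, hPi.2 x, hPf.2 x]
      ring
  simp only [bind_pure_comp, List.map_eq_map, List.foldl_map]
  show (1 / 2) * ∑ y,
      |((List.range T).foldl (fun (v : Ω → ℝ) j => vecMul v (Mstep j)) ν) y - πf y| ≤ ε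
  by_cases ht0 : t = 0
  · have hfin := foldl_prob Mstep (List.range T) hMstoch ν hν0 hν1
    have happ := ht _ hfin.1 hfin.2
    rw [ht0] at happ
    simp only [pow_zero, Matrix.vecMul_one] at happ
    linarith
  · have ht1 : 1 ≤ t := Nat.one_le_iff_ne_zero.mpr ht0
    have htR : (1:ℝ) ≤ t := by exact_mod_cast ht1
    have hT2 : 2 * (t:ℝ)^2 / ε ≤ T := by
      have := hT
      push_cast at this ⊢
      linarith [this]
    have htt : (t:ℝ) ≤ T := by
      have h1 : (t:ℝ) ≤ (t:ℝ)^2 := by nlinarith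
      have h2 : (t:ℝ)^2 ≤ 2*(t:ℝ)^2/ε := by
        rw [le_div_iff₀ hε]; nlinarith
      linarith
    have htT : t ≤ T := by exact_mod_cast htt
    have hTpos : (0:ℝ) < T := by linarith
    have hsplit : List.range T
        = List.range (T - t) ++ (List.range t).map (fun i => (T - t) + i) := by
      rw [← List.range_add]
      congr 1
      omega
    rw [hsplit, List.foldl_append, List.foldl_map]
    show (1 / 2) * ∑ y,
        |((List.range t).foldl (fun (v : Ω → ℝ) i => vecMul v (Mstep (T - t + i)))
            ((List.range (T - t)).foldl (fun (v : Ω → ℝ) j => vecMul v (Mstep j)) ν)) y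
          - πf y| ≤ ε
    set μ0 := (List.range (T - t)).foldl (fun (v : Ω → ℝ) j => vecMul v (Mstep j)) ν
      with hμ0def
    have hμ0 := foldl_prob Mstep (List.range (T - t))
      (fun j hj => hMstoch j (by rw [List.mem_range] at *; omega)) ν hν0 hν1
    have hstoch' : ∀ i ∈ List.range t, StochMat (Mstep (T - t + i)) := fun i hi =>
      hMstoch _ (by rw [List.mem_range] at *; omega)
    have hrow : ∀ i ∈ List.range t, ∀ x,
        ∑ y, |Mstep (T - t + i) x y - Pfin x y| ≤ 2 * (t:ℝ) / T := by
      intro i hi x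
      rw [List.mem_range] at hi
      have hiR : (i:ℝ) + 1 ≤ t := by exact_mod_cast Nat.succ_le_of_lt hi
      have hcast : ((T - t + i : ℕ) : ℝ) = (T:ℝ) - t + i := by
        push_cast [Nat.cast_sub htT]; ring
      set s : ℝ := (((T - t + i : ℕ) : ℝ) + 1) / T with hsdef
      have hs_eq : 1 - s = ((t:ℝ) - i - 1) / T := by
        rw [hsdef, hcast]
        field_simp
        ring
      have h1s : 0 ≤ 1 - s := by
        rw [hs_eq]
        exact div_nonneg (by linarith) hTpos.le
      calc ∑ y, |Mstep (T - t + i) x y - Pfin x y|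
          = ∑ y, (1 - s) * |Pinit x y - Pfin x y| := by
            refine Finset.sum_congr rfl fun y _ => ?_
            have he : Mstep (T - t + i) x y - Pfin x y
                = (1 - s) * (Pinit x y - Pfin x y) := by
              simp only [hMdef, Matrix.add_apply, Matrix.smul_apply, smul_eq_mul, hsdef]
              ring
            rw [he, abs_mul, abs_of_nonneg h1s]
        _ = (1 - s) * ∑ y, |Pinit x y - Pfin x y| := by rw [Finset.mul_sum]
        _ ≤ (1 - s) * 2 := by
            refine mul_le_mul_of_nonneg_left ?_ h1s
            calc ∑ y, |Pinit x y - Pfin x y| ≤ ∑ y, (Pinit x y + Pfin x y) := by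
                  refine Finset.sum_le_sum fun y _ => ?_
                  refine (abs_sub _ _).trans ?_
                  rw [abs_of_nonneg (hPi.1 x y), abs_of_nonneg (hPf.1 x y)]
              _ = 2 := by rw [Finset.sum_add_distrib, hPi.2 x, hPf.2 x]; norm_num
        _ ≤ 2 * (t:ℝ) / T := by
            rw [hs_eq, div_mul_eq_mul_div, div_le_div_iff₀ hTpos hTpos]
            nlinarith
    have hhyb : ∑ y, |((List.range t).foldl
          (fun (v : Ω → ℝ) i => vecMul v (Mstep (T - t + i))) μ0) y
          - vecMul μ0 (Pfin ^ t) y|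
        ≤ ((List.range t).map (fun _ => 2 * (t:ℝ) / T)).sum := by
      have := hybrid Pfin hPf (fun i => Mstep (T - t + i)) (fun _ => 2 * (t:ℝ) / T)
        (List.range t) hstoch' hrow μ0 hμ0.1 hμ0.2
      rw [List.length_range] at this
      exact this
    have hsum : ((List.range t).map (fun _ => 2 * (t:ℝ) / T)).sum
        = t * (2 * (t:ℝ) / T) := by
      rw [List.map_const', List.sum_replicate, List.length_range, nsmul_eq_mul]
    have hmix := ht μ0 hμ0.1 hμ0.2
    have htri := tri_sum ((List.range t).foldl
        (fun (v : Ω → ℝ) i => vecMul v (Mstep (T - t + i))) μ0)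
      (vecMul μ0 (Pfin ^ t)) πf
    have h3 : 2 * (t:ℝ)^2 ≤ T * ε := (div_le_iff₀ hε).mp hT2
    have hq : (t:ℝ) * (2 * (t:ℝ) / T) ≤ ε := by
      rw [← mul_div_assoc, div_le_iff₀ hTpos]
      nlinarith
    rw [hsum] at hhyb
    linarith
end

section
/- For any ν, any stochastic matrices P_initial, P_final with P_final having mixing time t_mix, setting T = K t_mix(ε/2) and N = (K−1) t_mix(ε/2), one has ‖ν P_{1/T} ⋯ P_1 − π_f‖_TV ≤ (T!/(N! T^{T−N})) · max_μ ‖μ P_final^{T−N} − π_f‖_TV + (1 − T!/(N! T^{T−N})). -/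
open Matrix Finset

set_option linter.unusedSectionVars false

section Aux
variable {Ω : Type*} [Fintype Ω] [DecidableEq Ω]

lemma aux_vecMul_apply (μ : Ω → ℝ) (M : Matrix Ω Ω ℝ) (y : Ω) :
    Matrix.vecMul μ M y = ∑ x, μ x * M x y := by
  simp [Matrix.vecMul, dotProduct]

lemma aux_vecMul_nonneg {μ : Ω → ℝ} {M : Matrix Ω Ω ℝ}
    (hμ : ∀ x, 0 ≤ μ x) (hM : ∀ x y, 0 ≤ M x y) (y : Ω) : 0 ≤ Matrix.vecMul μ M y := by
  rw [aux_vecMul_apply]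
  exact Finset.sum_nonneg fun x _ => mul_nonneg (hμ x) (hM x y)

lemma aux_vecMul_total {μ : Ω → ℝ} {M : Matrix Ω Ω ℝ}
    (hM : ∀ x, ∑ y, M x y = 1) : ∑ y, Matrix.vecMul μ M y = ∑ x, μ x := by
  simp only [aux_vecMul_apply]
  rw [Finset.sum_comm]
  simp [← Finset.mul_sum, hM]

lemma aux_pow_stoch {M : Matrix Ω Ω ℝ}
    (h1 : ∀ x y, 0 ≤ M x y) (h2 : ∀ x, ∑ y, M x y = 1) (n : ℕ) :
    (∀ x y, 0 ≤ (M ^ n) x y) ∧ ∀ x, ∑ y, (M ^ n) x y = 1 := by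
  induction n with
  | zero =>
    constructor
    · intro x y; simp [Matrix.one_apply]; split <;> norm_num
    · intro x; simp [Matrix.one_apply]
  | succ n ih =>
    constructor
    · intro x y
      rw [pow_succ, Matrix.mul_apply]
      exact Finset.sum_nonneg fun k _ => mul_nonneg (ih.1 x k) (h1 k y)
    · intro x
      simp only [pow_succ, Matrix.mul_apply]
      rw [Finset.sum_comm]
      simp [← Finset.mul_sum, h2, ih.2 x]

end Aux

/-- with `T = K·t_mix(ε/2)` and `N = (K−1)·t_mix(ε/2)`,
`‖ν P_{1/T} ⋯ P_1 − π_f‖_TV ≤ (T!/(N! T^{T−N})) · max_μ ‖μ P_fin^{T−N} − π_f‖_TV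
 + (1 − T!/(N! T^{T−N}))`. -/
theorem stmt_14 {Ω : Type*} [Fintype Ω] [DecidableEq Ω] [Nonempty Ω]
    (Pinit Pfin : Matrix Ω Ω ℝ)
    (hPi : (∀ x y, 0 ≤ Pinit x y) ∧ ∀ x, ∑ y, Pinit x y = 1)
    (hPf : (∀ x y, 0 ≤ Pfin x y) ∧ ∀ x, ∑ y, Pfin x y = 1)
    (hirr : ∃ k : ℕ, ∀ x y, 0 < (Pfin ^ k) x y)
    (πf : Ω → ℝ) (hπf : (∀ x, 0 ≤ πf x) ∧ ∑ x, πf x = 1)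
    (hstat : ∀ y, ∑ x, πf x * Pfin x y = πf y)
    (ε : ℝ) (hε : 0 < ε) (hε' : ε < 1)
    (m : ℕ)
    (hm : m = sInf {t : ℕ | ∀ μ : Ω → ℝ, (∀ x, 0 ≤ μ x) → ∑ x, μ x = 1 →
        (1 / 2) * ∑ y, |(Matrix.vecMul μ (Pfin ^ t)) y - πf y| ≤ ε / 2})
    (K : ℕ) (hK : 1 ≤ K)
    (T N : ℕ) (hT : T = K * m) (hN : N = (K - 1) * m)
    (ν : Ω → ℝ) (hν : (∀ x, 0 ≤ ν x) ∧ ∑ x, ν x = 1) :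
    (1 / 2) * ∑ y,
        |((List.range T).foldl
            (fun (μ : Ω → ℝ) k => Matrix.vecMul μ
              ((1 - ((k : ℝ) + 1) / T) • Pinit + (((k : ℝ) + 1) / T) • Pfin)) ν) y
          - πf y| ≤
      ((T.factorial : ℝ) / (N.factorial * (T : ℝ) ^ (T - N))) *
        (⨆ μ : {μ : Ω → ℝ // (∀ x, 0 ≤ μ x) ∧ ∑ x, μ x = 1},
          (1 / 2) * ∑ y, |(Matrix.vecMul μ.1 (Pfin ^ (T - N))) y - πf y|) +
      (1 - (T.factorial : ℝ) / (N.factorial * (T : ℝ) ^ (T - N))) := by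
  obtain ⟨hPi1, hPi2⟩ := hPi
  obtain ⟨hPf1, hPf2⟩ := hPf
  obtain ⟨hν1, hν2⟩ := hν
  obtain ⟨hπ1, hπ2⟩ := hπf
  clear hirr hstat hm hε hε'
  simp only [bind_pure_comp, List.map_eq_map, List.foldl_map] at *
  set f : (Ω → ℝ) → ℕ → (Ω → ℝ) := fun (μ : Ω → ℝ) k => Matrix.vecMul μ
      ((1 - ((k : ℝ) + 1) / T) • Pinit + (((k : ℝ) + 1) / T) • Pfin) with hfdef
  have hstep : ∀ n : ℕ, (List.range (n+1)).foldl f ν = f ((List.range n).foldl f ν) n := by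
    intro n
    rw [List.range_succ, List.foldl_append, List.foldl_cons, List.foldl_nil]
  have hNT : N ≤ T := by
    subst hT; subst hN; exact Nat.mul_le_mul_right m (Nat.sub_le K 1)
  -- total variation to a probability vector is at most 1
  have habs : ∀ w : Ω → ℝ, (∀ x, 0 ≤ w x) → ∑ x, w x = 1 →
      (1/2 : ℝ) * ∑ y, |w y - πf y| ≤ 1 := by
    intro w hw1 hw2
    have h1 : ∑ y, |w y - πf y| ≤ ∑ y, (w y + πf y) := by
      refine Finset.sum_le_sum fun y _ => ?_
      calc |w y - πf y| ≤ |w y| + |πf y| := abs_sub _ _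
        _ = w y + πf y := by rw [abs_of_nonneg (hw1 y), abs_of_nonneg (hπ1 y)]
    have h2 : ∑ y, (w y + πf y) = 2 := by
      rw [Finset.sum_add_distrib, hw2, hπ2]; norm_num
    linarith
  have hbdd : BddAbove (Set.range (fun μ : {μ : Ω → ℝ // (∀ x, 0 ≤ μ x) ∧ ∑ x, μ x = 1} =>
      (1/2 : ℝ) * ∑ y, |(Matrix.vecMul μ.1 (Pfin ^ (T - N))) y - πf y|)) := by
    refine ⟨1, ?_⟩
    rintro x ⟨μ, rfl⟩
    have hp := aux_pow_stoch hPf1 hPf2 (T - N)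
    exact habs _ (fun y => aux_vecMul_nonneg μ.2.1 hp.1 y)
      ((aux_vecMul_total hp.2).trans μ.2.2)
  by_cases hT0 : T = 0
  · -- degenerate case
    have hN0 : N = 0 := by omega
    have hc1 : (T.factorial : ℝ) / (N.factorial * (T : ℝ) ^ (T - N)) = 1 := by
      rw [hT0, hN0]; norm_num
    rw [hc1, one_mul, sub_self, add_zero]
    have hTN0 : T - N = 0 := by omega
    have hterm : (1/2 : ℝ) * ∑ y, |((List.range T).foldl f ν) y - πf y|
        = (1/2 : ℝ) * ∑ y, |(Matrix.vecMul ν (Pfin ^ (T - N))) y - πf y| := by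
      rw [hTN0, hT0]
      simp [Matrix.vecMul_one]
    rw [hterm]
    exact le_ciSup hbdd ⟨ν, hν1, hν2⟩
  -- main case
  have hTpos : 0 < T := Nat.pos_of_ne_zero hT0
  have hTR : (0:ℝ) < (T:ℝ) := by exact_mod_cast hTpos
  -- probability vectors preserved
  have hprob : ∀ n, n ≤ T → (∀ x, 0 ≤ ((List.range n).foldl f ν) x) ∧
      ∑ x, ((List.range n).foldl f ν) x = 1 := by
    intro n hn
    induction n with
    | zero => simpa using ⟨hν1, hν2⟩
    | succ n ih =>
      obtain ⟨ih1, ih2⟩ := ih (Nat.le_of_succ_le hn)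
      rw [hstep]
      have hs0 : (0:ℝ) ≤ ((n:ℝ)+1)/T := by positivity
      have hs1 : ((n:ℝ)+1)/T ≤ 1 := by
        rw [div_le_one hTR]
        exact_mod_cast hn
      constructor
      · intro y
        simp only [hfdef]
        apply aux_vecMul_nonneg ih1 _ y
        intro x z
        simp only [Matrix.add_apply, Matrix.smul_apply, smul_eq_mul]
        have h1 := hPi1 x z; have h2 := hPf1 x z
        nlinarith
      · simp only [hfdef]
        rw [aux_vecMul_total _]
        · exact ih2
        · intro x
          simp only [Matrix.add_apply, Matrix.smul_apply, smul_eq_mul]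
          rw [Finset.sum_add_distrib, ← Finset.mul_sum, ← Finset.mul_sum, hPi2, hPf2]
          ring
  set c : ℕ → ℝ := fun j => ∏ i ∈ Finset.range j, (((N:ℝ) + i + 1)/T) with hcdef
  have hc0 : ∀ j, 0 ≤ c j := by
    intro j
    apply Finset.prod_nonneg
    intro i _
    positivity
  -- main decomposition
  have claim : ∀ j, N + j ≤ T → ∃ e : Ω → ℝ, (∀ y, 0 ≤ e y) ∧ (∑ y, e y = 1 - c j) ∧
      ∀ y, ((List.range (N+j)).foldl f ν) y
        = c j * (Matrix.vecMul ((List.range N).foldl f ν) (Pfin ^ j)) y + e y := by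
    intro j
    induction j with
    | zero =>
      intro _
      refine ⟨fun _ => 0, fun _ => le_rfl, by simp [hcdef], ?_⟩
      intro y
      simp [hcdef, Matrix.vecMul_one]
    | succ j ih =>
      intro hj
      obtain ⟨e, he0, heS, heq⟩ := ih (by omega)
      obtain ⟨hprev0, hprevS⟩ := hprob (N+j) (by omega)
      have hs0 : (0:ℝ) ≤ ((N:ℝ) + j + 1)/T := by positivity
      have hs1 : ((N:ℝ) + j + 1)/T ≤ 1 := by
        rw [div_le_one hTR]
        have : ((N + j + 1 : ℕ) : ℝ) ≤ (T:ℝ) := by exact_mod_cast hj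
        push_cast at this; linarith
      refine ⟨fun y => (((N:ℝ) + j + 1)/T) * Matrix.vecMul e Pfin y
          + (1 - ((N:ℝ) + j + 1)/T) * Matrix.vecMul ((List.range (N+j)).foldl f ν) Pinit y,
        ?_, ?_, ?_⟩
      · intro y
        have h1 := aux_vecMul_nonneg he0 hPf1 y
        have h2 := aux_vecMul_nonneg hprev0 hPi1 y
        nlinarith
      · rw [Finset.sum_add_distrib, ← Finset.mul_sum, ← Finset.mul_sum,
          aux_vecMul_total hPf2, aux_vecMul_total hPi2, heS, hprevS]
        have hcsucc : c (j+1) = c j * (((N:ℝ) + j + 1)/T) := Finset.prod_range_succ _ _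
        rw [hcsucc]; ring
      · intro y
        have hNsucc : N + (j + 1) = (N + j) + 1 := rfl
        rw [hNsucc, hstep]
        simp only [hfdef]
        rw [aux_vecMul_apply]
        have hsplit : ∀ x : Ω, ((List.range (N+j)).foldl f ν) x *
            ((1 - (((N+j : ℕ) : ℝ) + 1) / T) • Pinit + ((((N+j : ℕ) : ℝ) + 1) / T) • Pfin) x y
            = (1 - ((N:ℝ) + j + 1)/T) * (((List.range (N+j)).foldl f ν) x * Pinit x y)
              + (((N:ℝ) + j + 1)/T) * (((List.range (N+j)).foldl f ν) x * Pfin x y) := by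
          intro x
          simp only [Matrix.add_apply, Matrix.smul_apply, smul_eq_mul]
          push_cast
          ring
        rw [Finset.sum_congr rfl (fun x _ => hsplit x)]
        rw [Finset.sum_add_distrib, ← Finset.mul_sum, ← Finset.mul_sum]
        rw [← aux_vecMul_apply _ Pinit y, ← aux_vecMul_apply _ Pfin y]
        have hPfin : Matrix.vecMul ((List.range (N+j)).foldl f ν) Pfin y
            = c j * Matrix.vecMul ((List.range N).foldl f ν) (Pfin ^ (j+1)) y
              + Matrix.vecMul e Pfin y := by
          have : Matrix.vecMul ((List.range (N+j)).foldl f ν) Pfin y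
              = ∑ x, (c j * (Matrix.vecMul ((List.range N).foldl f ν) (Pfin ^ j)) x + e x)
                  * Pfin x y := by
            rw [aux_vecMul_apply]
            exact Finset.sum_congr rfl fun x _ => by rw [heq x]
          rw [this]
          have hexp : ∀ x : Ω, (c j * (Matrix.vecMul ((List.range N).foldl f ν) (Pfin ^ j)) x + e x)
              * Pfin x y
              = c j * ((Matrix.vecMul ((List.range N).foldl f ν) (Pfin ^ j)) x * Pfin x y)
                + e x * Pfin x y := by intro x; ring
          rw [Finset.sum_congr rfl (fun x _ => hexp x), Finset.sum_add_distrib, ← Finset.mul_sum]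
          rw [← aux_vecMul_apply _ Pfin y, ← aux_vecMul_apply _ Pfin y]
          rw [Matrix.vecMul_vecMul, ← pow_succ]
        rw [hPfin]
        have hcsucc : c (j+1) = c j * (((N:ℝ) + j + 1)/T) := Finset.prod_range_succ _ _
        rw [hcsucc]
        ring
  -- value of c at T - N
  have hgen : ∀ j, c j = (((N+j).factorial : ℝ)) / (N.factorial * (T:ℝ)^j) := by
    intro j
    induction j with
    | zero =>
      simp [hcdef]
      rw [eq_div_iff (by positivity)]
      simp
    | succ j ih =>
      have hcsucc : c (j+1) = c j * (((N:ℝ) + j + 1)/T) := Finset.prod_range_succ _ _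
      rw [hcsucc, ih]
      have hfac : ((N + (j+1)).factorial : ℝ) = ((N + j + 1 : ℕ) : ℝ) * ((N+j).factorial : ℝ) := by
        rw [show N + (j+1) = (N + j) + 1 from rfl, Nat.factorial_succ]
        push_cast; ring
      rw [hfac]
      have hNf : (0:ℝ) < (N.factorial : ℝ) := by positivity
      field_simp
      push_cast
      ring
  have hcT : c (T - N) = (T.factorial : ℝ) / (N.factorial * (T:ℝ)^(T-N)) := by
    rw [hgen, Nat.add_sub_cancel' hNT]
  -- final assembly
  obtain ⟨e, he0, heS, heq⟩ := claim (T - N) (by omega)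
  have hNTN : N + (T - N) = T := Nat.add_sub_cancel' hNT
  rw [hNTN] at heq
  set w : Ω → ℝ := Matrix.vecMul ((List.range N).foldl f ν) (Pfin ^ (T - N)) with hw
  set cc : ℝ := c (T - N) with hcc
  have h1c : 0 ≤ 1 - cc := by
    have : 0 ≤ ∑ y, e y := Finset.sum_nonneg fun y _ => he0 y
    linarith [heS]
  have hy : ∀ y, |((List.range T).foldl f ν) y - πf y|
      ≤ cc * |w y - πf y| + (e y + (1 - cc) * πf y) := by
    intro y
    rw [heq y]
    have hrw : cc * w y + e y - πf y = cc * (w y - πf y) + (e y - (1 - cc) * πf y) := by ring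
    rw [hrw]
    calc |cc * (w y - πf y) + (e y - (1 - cc) * πf y)|
        ≤ |cc * (w y - πf y)| + |e y - (1 - cc) * πf y| := abs_add_le _ _
      _ ≤ cc * |w y - πf y| + (e y + (1 - cc) * πf y) := by
          rw [abs_mul, abs_of_nonneg (hc0 _)]
          gcongr
          calc |e y - (1 - cc) * πf y| ≤ |e y| + |(1 - cc) * πf y| := abs_sub _ _
            _ = e y + (1 - cc) * πf y := by
                rw [abs_of_nonneg (he0 y), abs_of_nonneg (mul_nonneg h1c (hπ1 y))]
  have hsum : (1/2 : ℝ) * ∑ y, |((List.range T).foldl f ν) y - πf y|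
      ≤ cc * ((1/2 : ℝ) * ∑ y, |w y - πf y|) + (1 - cc) := by
    have h1 : ∑ y, |((List.range T).foldl f ν) y - πf y|
        ≤ ∑ y, (cc * |w y - πf y| + (e y + (1 - cc) * πf y)) :=
      Finset.sum_le_sum fun y _ => hy y
    have h2 : ∑ y, (cc * |w y - πf y| + (e y + (1 - cc) * πf y))
        = cc * ∑ y, |w y - πf y| + (1 - cc) + (1 - cc) := by
      rw [Finset.sum_add_distrib, Finset.sum_add_distrib, ← Finset.mul_sum, ← Finset.mul_sum,
        heS, hπ2]
      ring
    rw [h2] at h1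
    linarith
  have hle : (1/2 : ℝ) * ∑ y, |w y - πf y|
      ≤ ⨆ μ : {μ : Ω → ℝ // (∀ x, 0 ≤ μ x) ∧ ∑ x, μ x = 1},
          (1/2 : ℝ) * ∑ y, |(Matrix.vecMul μ.1 (Pfin ^ (T - N))) y - πf y| :=
    le_ciSup hbdd ⟨(List.range N).foldl f ν, (hprob N hNT).1, (hprob N hNT).2⟩
  rw [← hcT]
  calc (1/2 : ℝ) * ∑ y, |((List.range T).foldl f ν) y - πf y|
      ≤ cc * ((1/2 : ℝ) * ∑ y, |w y - πf y|) + (1 - cc) := hsum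
    _ ≤ cc * (⨆ μ : {μ : Ω → ℝ // (∀ x, 0 ≤ μ x) ∧ ∑ x, μ x = 1},
          (1/2 : ℝ) * ∑ y, |(Matrix.vecMul μ.1 (Pfin ^ (T - N))) y - πf y|) + (1 - cc) := by
        gcongr
    _ = _ := rfl
end
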